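/- arXiv:1804.11292 — 2 statements merged into one kernel-verified Lean document; each statement's English description precedes it below -/
import Mathlib

section
/- Let Γ act properly discontinuously on a manifold M and let η be a Γ-invariant differential form with Γ-compact support (π(supp η) compact in M/Γ). If φ is a cutoff function (smooth, ∑_{γ∈Γ} φ∘γ = 1, and supp(φ) ∩ π⁻¹(B) compact for every compact B ⊆ M/Γ), then φη has compact support and m(φη) = ∑_{γ∈Γ} γ*(φη) = η. Hence the average operator m : Ω_c(M) → Ω(M)^Γ_{Γc} is surjective. -/
open scoped Manifold

/-- Pullback of a `p`-form on `M` by the diffeomorphism given by `γ ∈ Γ`: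
`(γ*ω)(x) = ω(γ•x) ∘ (d(γ•·)_x, …, d(γ•·)_x)`. -/
noncomputable def pullForm
    {E : Type*} [NormedAddCommGroup E] [NormedSpace ℝ E]
    {H : Type*} [TopologicalSpace H] (I : ModelWithCorners ℝ E H)
    {M : Type*} [TopologicalSpace M] [ChartedSpace H M]
    {Γ : Type*} [Group Γ] [MulAction Γ M] {p : ℕ}
    (γ : Γ) (ω : M → (E [⋀^Fin p]→L[ℝ] ℝ)) : M → (E [⋀^Fin p]→L[ℝ] ℝ) :=
  fun x => (ω (γ • x)).compContinuousLinearMap (mfderiv I I (fun y : M => γ • y) x)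

/-- A `p`-form on `M` (a family of continuous alternating `p`-linear maps on the tangent
spaces) is smooth if it is smooth as a map into continuous multilinear maps. -/
def SmoothForm
    {E : Type*} [NormedAddCommGroup E] [NormedSpace ℝ E]
    {H : Type*} [TopologicalSpace H] (I : ModelWithCorners ℝ E H)
    {M : Type*} [TopologicalSpace M] [ChartedSpace H M] {p : ℕ}
    (ω : M → (E [⋀^Fin p]→L[ℝ] ℝ)) : Prop :=
  ContMDiff I 𝓘(ℝ, ContinuousMultilinearMap ℝ (fun _ : Fin p => E) ℝ) (⊤ : ℕ∞)
    (fun x => (ω x).toContinuousMultilinearMap)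

/-- if `η` is a `Γ`-invariant form with `Γ`-compact support and `φ` is a
cutoff function, then `φη` has compact support and `m(φη) = ∑_γ γ*(φη) = η`; hence the
average operator `m : Ω_c(M) → Ω(M)^Γ_{Γc}` is surjective. -/
theorem average_surjective
    {E : Type*} [NormedAddCommGroup E] [NormedSpace ℝ E]
    {H : Type*} [TopologicalSpace H] (I : ModelWithCorners ℝ E H)
    {M : Type*} [TopologicalSpace M] [ChartedSpace H M] [IsManifold I (⊤ : ℕ∞) M]
    {Γ : Type*} [Group Γ] [MulAction Γ M]
    (hsmoothact : ∀ γ : Γ, ContMDiff I I (⊤ : ℕ∞) (fun x : M => γ • x))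
    (hpd : ∀ K : Set M, IsCompact K →
      {γ : Γ | ((fun x : M => γ • x) '' K ∩ K).Nonempty}.Finite)
    {p : ℕ} (η : M → (E [⋀^Fin p]→L[ℝ] ℝ)) (hη : SmoothForm I η)
    (hinv : ∀ γ : Γ, pullForm I γ η = η)
    (hΓc : IsCompact (Quotient.mk (MulAction.orbitRel Γ M) '' tsupport η))
    (φ : M → ℝ) (hφ : ContMDiff I 𝓘(ℝ, ℝ) (⊤ : ℕ∞) φ) (hφ0 : ∀ x, 0 ≤ φ x)
    (hφsum : ∀ x : M, HasSum (fun γ : Γ => φ (γ • x)) 1)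
    (hφsupp : ∀ B : Set (Quotient (MulAction.orbitRel Γ M)), IsCompact B →
      IsCompact (tsupport φ ∩ (Quotient.mk (MulAction.orbitRel Γ M)) ⁻¹' B)) :
    HasCompactSupport (fun x => φ x • η x) ∧
    ∀ (x : M) (v : Fin p → E),
      HasSum (fun γ : Γ => pullForm I γ (fun y => φ y • η y) x v) (η x v) := by
  constructor
  · have hK := hφsupp _ hΓc
    refine hK.of_isClosed_subset (isClosed_tsupport _) ?_
    intro x hx
    refine ⟨tsupport_smul_subset_left φ η hx, ?_⟩
    exact Set.subset_preimage_image _ _ (tsupport_smul_subset_right φ η hx)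
  · intro x v
    have key : ∀ γ : Γ, pullForm I γ (fun y => φ y • η y) x v
        = φ (γ • x) * (η x v) := by
      intro γ
      have h := congrFun (hinv γ) x
      calc pullForm I γ (fun y => φ y • η y) x v
          = φ (γ • x) * (pullForm I γ η x v) := by
            simp [pullForm]
            rfl
        _ = φ (γ • x) * η x v := by rw [h]
    simp only [key]
    simpa using (hφsum x).mul_right (η x v)
end

section
/- Let Γ act properly discontinuously on a connected non-compact manifold M with M/Γ compact, and let φ be a compactly supported cutoff function (∑_{γ∈Γ} φ∘γ = 1). Then dφ is a coinvariant compactly supported 1-form (m(dφ) = 0) and its class θ_Γ = [dφ] in H^1(Ω_c(M)_Γ) is nonzero: there is no compactly supported coinvariant function ξ with φ − ξ constant. -/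
set_option maxHeartbeats 1000000


open scoped Manifold

/-- on a connected non-compact manifold `M` with a properly discontinuous
action with compact quotient, for a compactly supported cutoff function `φ`
(`∑_γ φ∘γ = 1`), the 1-form `dφ` is coinvariant (`m(dφ) = 0`) and its class
`θ_Γ = [dφ] ∈ H¹(Ω_c(M)_Γ)` is nonzero: there is no compactly supported coinvariant
function `ξ` with `φ - ξ` constant. -/
theorem cutoff_class_nonzero
    {E : Type*} [NormedAddCommGroup E] [NormedSpace ℝ E]
    {H : Type*} [TopologicalSpace H] (I : ModelWithCorners ℝ E H)
    {M : Type*} [TopologicalSpace M] [ChartedSpace H M] [IsManifold I (⊤ : ℕ∞) M]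
    [ConnectedSpace M] [NoncompactSpace M]
    {Γ : Type*} [Group Γ] [MulAction Γ M]
    [CompactSpace (Quotient (MulAction.orbitRel Γ M))]
    (hsmoothact : ∀ γ : Γ, ContMDiff I I (⊤ : ℕ∞) (fun x : M => γ • x))
    (hpd : ∀ K : Set M, IsCompact K →
      {γ : Γ | ((fun x : M => γ • x) '' K ∩ K).Nonempty}.Finite)
    (φ : M → ℝ) (hφ : ContMDiff I 𝓘(ℝ, ℝ) (⊤ : ℕ∞) φ) (hφc : HasCompactSupport φ)
    (hφsum : ∀ x : M, HasSum (fun γ : Γ => φ (γ • x)) 1) :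
    (∀ (x : M) (v : TangentSpace I x),
        HasSum (fun γ : Γ => mfderiv I 𝓘(ℝ, ℝ) (fun y => φ (γ • y)) x v) 0) ∧
    ¬ ∃ ξ ∈ Submodule.span ℝ {h : M → ℝ | ∃ (g : M → ℝ) (γ : Γ),
          ContMDiff I 𝓘(ℝ, ℝ) (⊤ : ℕ∞) g ∧ HasCompactSupport g ∧
          h = g - fun x => g (γ • x)},
        ∃ c : ℝ, ∀ x : M, φ x - ξ x = c := by
  classical
  -- continuity of the action maps
  have hcont : ∀ γ : Γ, Continuous (fun x : M => γ • x) := fun γ => (hsmoothact γ).continuous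
  -- finiteness of return times to a compact set
  have hfin : ∀ (g : M → ℝ), HasCompactSupport g → ∀ x : M,
      {γ : Γ | γ • x ∈ tsupport g}.Finite := by
    intro g hg x
    have hK : IsCompact (tsupport g ∪ {x}) := hg.union isCompact_singleton
    refine (hpd _ hK).subset ?_
    intro γ hγ
    exact ⟨γ • x, ⟨⟨x, Or.inr rfl, rfl⟩, Or.inl hγ⟩⟩
  constructor
  · -- Part 1: m(dφ) = 0
    intro x v
    -- pick γ₀ with φ (γ₀ • x) ≠ 0
    obtain ⟨γ₀, hγ₀⟩ : ∃ γ₀ : Γ, φ (γ₀ • x) ≠ 0 := by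
      by_contra h
      push_neg at h
      have : HasSum (fun γ : Γ => φ (γ • x)) 0 := by
        simpa [funext h] using hasSum_zero (α := ℝ) (β := Γ)
      exact one_ne_zero ((hφsum x).unique this)
    -- a compact neighborhood of x
    set C : Set M := (fun y : M => γ₀ • y) ⁻¹' tsupport φ with hC
    have hCcomp : IsCompact C := by
      have : C = (fun y : M => γ₀⁻¹ • y) '' tsupport φ := by
        ext y
        constructor
        · intro hy
          exact ⟨γ₀ • y, hy, by simp⟩
        · rintro ⟨z, hz, rfl⟩
          simpa [hC] using hz
      rw [this]
      exact hφc.image (hcont γ₀⁻¹)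
    have hCnbhd : C ∈ nhds x := by
      have hopen : IsOpen ((fun y : M => φ (γ₀ • y)) ⁻¹' {(0:ℝ)}ᶜ) :=
        (isOpen_compl_singleton).preimage ((hφ.continuous).comp (hcont γ₀))
      refine Filter.mem_of_superset (hopen.mem_nhds hγ₀) ?_
      intro y hy
      exact subset_closure hy
    -- the finite set of relevant group elements
    have hK : IsCompact (C ∪ tsupport φ) := hCcomp.union hφc
    set T : Finset Γ := (hpd _ hK).toFinset with hT
    have hout : ∀ γ ∉ T, ∀ y ∈ C, φ (γ • y) = 0 := by
      intro γ hγ y hy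
      by_contra hne
      apply hγ
      rw [hT, Set.Finite.mem_toFinset]
      exact ⟨γ • y, ⟨⟨y, Or.inl hy, rfl⟩, Or.inr (subset_closure hne)⟩⟩
    have heq : ∀ y ∈ C, (∑ γ ∈ T, φ (γ • y)) = 1 := by
      intro y hy
      have h1 : HasSum (fun γ : Γ => φ (γ • y)) (∑ γ ∈ T, φ (γ • y)) :=
        hasSum_sum_of_ne_finset_zero (fun γ hγ => hout γ hγ y hy)
      exact h1.unique (hφsum y)
    have hdiffγ : ∀ γ : Γ, MDifferentiableAt I 𝓘(ℝ, ℝ) (fun y => φ (γ • y)) x :=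
      fun γ => ((hφ.comp (hsmoothact γ)).mdifferentiable (by simp)) x
    have hdiffAll : ∀ s : Finset Γ,
        MDifferentiable I 𝓘(ℝ, ℝ) (fun y => ∑ γ ∈ s, φ (γ • y)) := by
      intro s
      induction s using Finset.induction_on with
      | empty => simpa using mdifferentiable_const (I := I) (I' := 𝓘(ℝ, ℝ)) (c := (0:ℝ))
      | @insert b t hb iht =>
        have h1 : MDifferentiable I 𝓘(ℝ, ℝ) (fun y => φ (b • y)) :=
          (hφ.comp (hsmoothact b)).mdifferentiable (by simp)
        have := h1.add iht
        have hfg : (fun y => ∑ γ ∈ insert b t, φ (γ • y)) =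
            (fun y => φ (b • y)) + (fun y => ∑ γ ∈ t, φ (γ • y)) := by
          funext y; simp [Finset.sum_insert hb]
        rw [hfg]
        exact this
    have hsum_deriv : ∀ s : Finset Γ,
        (mfderiv I 𝓘(ℝ, ℝ) (fun y => ∑ γ ∈ s, φ (γ • y)) x : TangentSpace I x →L[ℝ] ℝ) =
          ∑ γ ∈ s, (mfderiv I 𝓘(ℝ, ℝ) (fun y => φ (γ • y)) x : TangentSpace I x →L[ℝ] ℝ) := by
      intro s
      induction s using Finset.induction_on with
      | empty =>
        rw [show (fun y : M => ∑ γ ∈ (∅ : Finset Γ), φ (γ • y)) = fun _ => (0:ℝ) by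
          funext y; simp]
        simp [mfderiv_const]
        exact (Finset.sum_empty (M := TangentSpace I x →L[ℝ] ℝ) (f := fun γ => mfderiv I 𝓘(ℝ, ℝ) (fun y => φ (γ • y)) x)).symm
      | @insert a s ha ih =>
        have hfg : (fun y => ∑ γ ∈ insert a s, φ (γ • y)) =
            ((fun y => φ (a • y)) + fun y => ∑ γ ∈ s, φ (γ • y)) := by
          funext y; simp [Finset.sum_insert ha]
        rw [hfg]
        exact (mfderiv_add (hdiffγ a) ((hdiffAll s) x)).trans
          (by rw [ih]; exact (Finset.sum_insert (M := TangentSpace I x →L[ℝ] ℝ) (f := fun γ => mfderiv I 𝓘(ℝ, ℝ) (fun y => φ (γ • y)) x) ha).symm)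
    have hconst : mfderiv I 𝓘(ℝ, ℝ) (fun y => ∑ γ ∈ T, φ (γ • y)) x = 0 := by
      have hev : (fun y => ∑ γ ∈ T, φ (γ • y)) =ᶠ[nhds x] (fun _ => (1:ℝ)) :=
        Filter.eventually_of_mem hCnbhd heq
      rw [hev.mfderiv_eq]
      exact mfderiv_const
    have hzero_out : ∀ γ ∉ T, mfderiv I 𝓘(ℝ, ℝ) (fun y => φ (γ • y)) x v = 0 := by
      intro γ hγ
      have hev : (fun y => φ (γ • y)) =ᶠ[nhds x] (fun _ => (0:ℝ)) :=
        Filter.eventually_of_mem hCnbhd (fun y hy => hout γ hγ y hy)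
      rw [hev.mfderiv_eq, mfderiv_const]
      rfl
    have hfinsum : (∑ γ ∈ T, (mfderiv I 𝓘(ℝ, ℝ) (fun y => φ (γ • y)) x v : ℝ)) = 0 := by
      have hL : ∀ (L : Γ → (TangentSpace I x →L[ℝ] ℝ)) (s : Finset Γ),
          (∑ γ ∈ s, L γ) v = ∑ γ ∈ s, L γ v :=
        fun L s => ContinuousLinearMap.sum_apply s L v
      have h2 := (hsum_deriv T).symm.trans hconst
      have h1 := congrArg (fun L : TangentSpace I x →L[ℝ] ℝ => L v) h2
      have h4 := (hL (fun γ => mfderiv I 𝓘(ℝ, ℝ) (fun y => φ (γ • y)) x) T).symm.trans h1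
      exact h4.trans rfl
    have := hasSum_sum_of_ne_finset_zero
      (f := fun γ : Γ => (mfderiv I 𝓘(ℝ, ℝ) (fun y => φ (γ • y)) x v : ℝ)) (L := SummationFilter.unconditional Γ) hzero_out
    rwa [hfinsum] at this
  · -- Part 2: the class is nonzero
    rintro ⟨ξ, hξmem, c, hc⟩
    -- every element of the span has compact support and coinvariant sum zero
    have key : HasCompactSupport ξ ∧ ∀ x : M, HasSum (fun γ : Γ => ξ (γ • x)) 0 := by
      refine Submodule.span_induction ?_ ?_ ?_ ?_ hξmem
      · rintro h ⟨g, γ₀, hg, hgc, rfl⟩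
        constructor
        · -- compact support of g - g ∘ γ₀
          have h2 : HasCompactSupport (fun x : M => g (γ₀ • x)) := by
            have hsub : tsupport (fun x : M => g (γ₀ • x)) ⊆
                (fun x : M => γ₀ • x) ⁻¹' tsupport g := by
              apply closure_minimal
              · intro x hx
                exact subset_closure hx
              · exact (isClosed_tsupport g).preimage (hcont γ₀)
            have himg : (fun x : M => γ₀ • x) ⁻¹' tsupport g =
                (fun x : M => γ₀⁻¹ • x) '' tsupport g := by
              ext y
              constructor
              · intro hy; exact ⟨γ₀ • y, hy, by simp⟩
              · rintro ⟨z, hz, rfl⟩; simpa using hz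
            have hcomp : IsCompact ((fun x : M => γ₀⁻¹ • x) '' tsupport g) :=
              hgc.image (hcont γ₀⁻¹)
            exact hcomp.of_isClosed_subset (isClosed_tsupport _) (himg ▸ hsub)
          have h3 : (g - fun x : M => g (γ₀ • x)) = g + -(fun x : M => g (γ₀ • x)) := by
            funext y; simp [sub_eq_add_neg]
          rw [h3]
          exact hgc.add h2.neg
        · intro x
          -- g (γ•x) has finite support in γ
          have hfs := hfin g hgc x
          have h1 : HasSum (fun γ : Γ => g (γ • x)) (∑ γ ∈ hfs.toFinset, g (γ • x)) := by
            apply hasSum_sum_of_ne_finset_zero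
            intro γ hγ
            rw [Set.Finite.mem_toFinset] at hγ
            exact image_eq_zero_of_notMem_tsupport hγ
          have h2 : HasSum (fun γ : Γ => g ((γ₀ * γ) • x))
              (∑ γ ∈ hfs.toFinset, g (γ • x)) :=
            ((Equiv.mulLeft γ₀).hasSum_iff).mpr h1
          have h4 : (fun γ : Γ => (g - fun y => g (γ₀ • y)) (γ • x)) =
              fun γ : Γ => g (γ • x) - g ((γ₀ * γ) • x) := by
            funext γ; simp [mul_smul]
          rw [h4]
          simpa using h1.sub h2
      · exact ⟨HasCompactSupport.zero, fun x => by simpa using hasSum_zero⟩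
      · rintro f g _ _ ⟨hfc, hfs⟩ ⟨hgc, hgs⟩
        refine ⟨hfc.add hgc, fun x => ?_⟩
        simpa using (hfs x).add (hgs x)
      · rintro a f _ ⟨hfc, hfs⟩
        have hsupp : Function.support (a • f) ⊆ Function.support f := by
          intro x hx
          simp only [Function.mem_support, Pi.smul_apply, smul_eq_mul] at hx ⊢
          exact fun h => hx (by rw [h, mul_zero])
        refine ⟨hfc.mono hsupp, fun x => ?_⟩
        have := (hfs x).const_smul a
        simpa [smul_eq_mul] using this
    obtain ⟨hξc, hξs⟩ := key
    -- pick a point outside both supports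
    have hcomp : IsCompact (tsupport φ ∪ tsupport ξ) := hφc.union hξc
    obtain ⟨x₀, hx₀⟩ := (Set.ne_univ_iff_exists_notMem _).mp hcomp.ne_univ
    have hφ0 : φ x₀ = 0 := image_eq_zero_of_notMem_tsupport (fun h => hx₀ (Or.inl h))
    have hξ0 : ξ x₀ = 0 := image_eq_zero_of_notMem_tsupport (fun h => hx₀ (Or.inr h))
    have hc0 : c = 0 := by rw [← hc x₀, hφ0, hξ0, sub_zero]
    have hφξ : ∀ x, φ x = ξ x := fun x => by
      have := hc x; rw [hc0, sub_eq_zero] at this; exact this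
    have h1 : HasSum (fun γ : Γ => ξ (γ • x₀)) 1 := by
      have := hφsum x₀
      simpa [funext fun y => hφξ y] using this
    exact one_ne_zero (h1.unique (hξs x₀))
end
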